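/- Let A be a symmetric positive definite m×m real matrix and v a unit vector in ℝᵐ. Then (vᵀA⁻²v) / (vᵀA⁻¹v)² ≤ ‖A⁻¹‖·‖A‖, where ‖·‖ denotes the operator norm. -/

import Mathlib

open Matrix
open scoped Matrix.Norms.L2Operator
open scoped MatrixOrder

private lemma aux_dot_le {m : ℕ} (A : Matrix (Fin m) (Fin m) ℝ) (x : Fin m → ℝ) :
    x ⬝ᵥ A.mulVec x ≤ ‖A‖ * (x ⬝ᵥ x) := by
  set x' : EuclideanSpace ℝ (Fin m) := (WithLp.equiv 2 (Fin m → ℝ)).symm x with hx'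
  set y' : EuclideanSpace ℝ (Fin m) := (WithLp.equiv 2 (Fin m → ℝ)).symm (A.mulVec x) with hy'
  have h1 : x ⬝ᵥ A.mulVec x = inner ℝ x' y' := by
    simp [PiLp.inner_apply, dotProduct, hx', hy', mul_comm]
  have h2 : x ⬝ᵥ x = ‖x'‖ ^ 2 := by
    rw [← real_inner_self_eq_norm_sq]
    simp only [PiLp.inner_apply, dotProduct, hx']
    simp [sq]
  have h3 : ‖y'‖ ≤ ‖A‖ * ‖x'‖ := A.l2_opNorm_mulVec x'
  calc x ⬝ᵥ A.mulVec x = inner ℝ x' y' := h1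
    _ ≤ ‖x'‖ * ‖y'‖ := real_inner_le_norm x' y'
    _ ≤ ‖x'‖ * (‖A‖ * ‖x'‖) := mul_le_mul_of_nonneg_left h3 (norm_nonneg _)
    _ = ‖A‖ * (x ⬝ᵥ x) := by rw [h2]; ring

private lemma aux_sym_move {m : ℕ} (M : Matrix (Fin m) (Fin m) ℝ) (hM : Mᵀ = M)
    (a b : Fin m → ℝ) : (M.mulVec a) ⬝ᵥ b = a ⬝ᵥ (M.mulVec b) := by
  rw [dotProduct_comm, dotProduct_mulVec, ← mulVec_transpose, hM, dotProduct_comm,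
    dotProduct_mulVec, ← mulVec_transpose, hM, dotProduct_comm]

private lemma aux_sq_le {m : ℕ} {A : Matrix (Fin m) (Fin m) ℝ} (hA : A.PosSemidef)
    (x : Fin m → ℝ) :
    (A.mulVec x) ⬝ᵥ (A.mulVec x) ≤ ‖A‖ * (x ⬝ᵥ A.mulVec x) := by
  have hAsym : Aᵀ = A := by simpa using hA.isHermitian.eq
  set S := CFC.sqrt A with hSdef
  have hSsym : Sᵀ = S := by simpa using (CFC.sqrt_nonneg A).posSemidef.isHermitian.eq
  have hSS : S * S = A := CFC.sqrt_mul_sqrt_self A hA.nonneg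
  set w := S.mulVec x with hw
  have hw1 : w ⬝ᵥ w = x ⬝ᵥ A.mulVec x := by
    rw [hw, aux_sym_move S hSsym, mulVec_mulVec, hSS]
  have hw2 : (A.mulVec x) ⬝ᵥ (A.mulVec x) = w ⬝ᵥ A.mulVec w := by
    have hSAS : S * A * S = A * A := by rw [← hSS]; noncomm_ring
    rw [aux_sym_move A hAsym, mulVec_mulVec, hw, aux_sym_move S hSsym,
      mulVec_mulVec, mulVec_mulVec, hSAS]
  rw [hw2, ← hw1]
  exact aux_dot_le A w

/-- For a symmetric positive definite matrix `A` and a unit vector `v`,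
`(vᵀA⁻²v)/(vᵀA⁻¹v)² ≤ ‖A⁻¹‖·‖A‖` (operator norms). -/
theorem posDef_quadratic_quotient_le_condition_number
    {m : ℕ} (A : Matrix (Fin m) (Fin m) ℝ) (hA : A.PosDef)
    (v : Fin m → ℝ) (hv : v ⬝ᵥ v = 1) :
    (v ⬝ᵥ (A⁻¹ * A⁻¹).mulVec v) / (v ⬝ᵥ A⁻¹.mulVec v) ^ 2 ≤ ‖A⁻¹‖ * ‖A‖ := by
  have hB : (A⁻¹).PosDef := hA.inv
  have hAsym : Aᵀ = A := by simpa using hA.isHermitian.eq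
  have hBsym : (A⁻¹)ᵀ = A⁻¹ := by simpa using hB.isHermitian.eq
  have hvne : v ≠ 0 := by
    intro h; rw [h] at hv; simp at hv
  have hd : 0 < v ⬝ᵥ A⁻¹.mulVec v := by
    have := hB.dotProduct_mulVec_pos hvne
    simpa using this
  set d := v ⬝ᵥ A⁻¹.mulVec v with hddef
  set u := A⁻¹.mulVec v with hu
  have hAu : A.mulVec u = v := by
    rw [hu, mulVec_mulVec, mul_nonsing_inv A (isUnit_iff_ne_zero.mpr hA.det_pos.ne'), one_mulVec]
  have hnum : v ⬝ᵥ (A⁻¹ * A⁻¹).mulVec v = (A⁻¹.mulVec v) ⬝ᵥ (A⁻¹.mulVec v) := by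
    rw [← mulVec_mulVec, ← aux_sym_move _ hBsym]
  have h1 : v ⬝ᵥ (A⁻¹ * A⁻¹).mulVec v ≤ ‖A⁻¹‖ * d := by
    rw [hnum]; exact aux_sq_le hB.posSemidef v
  have h2 : 1 ≤ ‖A‖ * d := by
    have := aux_sq_le hA.posSemidef u
    rw [hAu, hv] at this
    rwa [dotProduct_comm u v, ← hddef] at this
  rw [div_le_iff₀ (by positivity)]
  have hBn : (0:ℝ) ≤ ‖A⁻¹‖ := norm_nonneg _
  nlinarith [mul_le_mul_of_nonneg_left h2 (mul_nonneg hBn hd.le)]
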